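/- Let X be a bounded random vector with values in ℝ^k such that E[XX'] is positive definite. Then there exist positive constants c₁ and c₂, not depending on u, such that for every vector u ∈ ℝ^k with ‖u‖ = 1, P(|X'u| > c₁) > c₂. -/

import Mathlib

open MeasureTheory ProbabilityTheory Filter Topology
open scoped ENNReal NNReal BigOperators

noncomputable section

/-- Euclidean space ℝ^n. -/
abbrev Vec (n : ℕ) := EuclideanSpace ℝ (Fin n)

/-- Euclidean dot product `x'y`. -/
def dot {n : ℕ} (x y : Vec n) : ℝ := ∑ i, x i * y i

/-- Parameter θ = (β, γ, ψ). -/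
abbrev Param (p1 p2 q : ℕ) := Vec p1 × Vec p2 × Vec q

/-- Covariates W = (Z, U, V, X). -/
abbrev Cov (p1 p2 q : ℕ) := Vec p1 × Vec p2 × ℝ × Vec q

variable {p1 p2 q : ℕ}

/-- η(W,θ) = Z'β + U'γ·1{V + X'ψ ≥ 0}. -/
def eta (θ : Param p1 p2 q) (w : Cov p1 p2 q) : ℝ :=
  dot w.1 θ.1 + dot w.2.1 θ.2.1 * (if 0 ≤ w.2.2.1 + dot w.2.2.2 θ.2.2 then 1 else 0)

/-- Smoothed index ηₙ(W,θ) = Z'β + U'γ·K((V + X'ψ)/h). -/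
def etaS (K : ℝ → ℝ) (h : ℝ) (θ : Param p1 p2 q) (w : Cov p1 p2 q) : ℝ :=
  dot w.1 θ.1 + dot w.2.1 θ.2.1 * K ((w.2.2.1 + dot w.2.2.2 θ.2.2) / h)

/-- `f` is a conditional density (w.r.t. Lebesgue measure) of the real random variable `T`
given the random element `W`. -/
def IsCondDensity {Ω E : Type*} [MeasurableSpace Ω] [MeasurableSpace E]
    (P : Measure Ω) (T : Ω → ℝ) (W : Ω → E) (f : ℝ → E → ℝ) : Prop :=
  ∀ s : Set ℝ, MeasurableSet s →
    (fun ω => ∫ t in s, f t (W ω)) =ᵐ[P]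
      P[fun ω => s.indicator (fun _ => (1:ℝ)) (T ω) | MeasurableSpace.comap W inferInstance]

/-- Cumulative hazard Λ(t) = ∫₀ᵗ λ(u) du. -/
def Lam (lam : ℝ → ℝ) (t : ℝ) : ℝ := ∫ u in (0:ℝ)..t, lam u

/-- The Cox-model conditional density of T° given W = w, under parameter (θ, λ). -/
def coxDensity (lam : ℝ → ℝ) (θ : Param p1 p2 q) (t : ℝ) (w : Cov p1 p2 q) : ℝ :=
  lam t * Real.exp (eta θ w) * Real.exp (-(Real.exp (eta θ w)) * Lam lam t)

lemma dot_eq_inner {n : ℕ} (x y : Vec n) : dot x y = inner ℝ x y := by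
  simp [dot, PiLp.inner_apply, RCLike.inner_apply, conj_trivial, mul_comm]

lemma abs_dot_le {n : ℕ} (x y : Vec n) : |dot x y| ≤ ‖x‖ * ‖y‖ := by
  rw [dot_eq_inner]
  exact abs_real_inner_le_norm x y

lemma abs_coord_le {n : ℕ} (x : Vec n) (i : Fin n) : |x i| ≤ ‖x‖ := by
  rw [EuclideanSpace.norm_eq]
  have : |x i| = Real.sqrt (‖x i‖ ^ 2) := by
    rw [Real.sqrt_sq_eq_abs]; simp
  rw [this]
  apply Real.sqrt_le_sqrt
  exact Finset.single_le_sum (f := fun j => ‖x j‖ ^ 2) (fun j _ => by positivity)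
    (Finset.mem_univ i)

lemma dot_sq_expand {n : ℕ} (x u : Vec n) :
    (dot x u) ^ 2 = ∑ i, ∑ j, (x i * x j) * (u i * u j) := by
  rw [dot, sq, Finset.sum_mul_sum]
  exact Finset.sum_congr rfl fun i _ => Finset.sum_congr rfl fun j _ => by ring

theorem paley_zygmund_lower_bound {k : ℕ}
    {Ω : Type*} [MeasurableSpace Ω]
    (P : Measure Ω) [IsProbabilityMeasure P]
    (X : Ω → Vec k) (hXm : Measurable X)
    (hXbdd : ∃ M : ℝ, ∀ ω, ‖X ω‖ ≤ M)
    (hpos : ∀ u : Vec k, u ≠ 0 → 0 < ∫ ω, (dot (X ω) u) ^ 2 ∂P) :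
    ∃ c₁ > (0:ℝ), ∃ c₂ > (0:ℝ), ∀ u : Vec k, ‖u‖ = 1 →
      ENNReal.ofReal c₂ < P {ω | c₁ < |dot (X ω) u|} := by
  by_cases hsp : ∃ u : Vec k, ‖u‖ = 1
  swap
  · exact ⟨1, one_pos, 1, one_pos, fun u hu => absurd ⟨u, hu⟩ hsp⟩
  obtain ⟨M, hM⟩ := hXbdd
  set M' : ℝ := max M 1 with hM'def
  have hM'0 : (0:ℝ) < M' := lt_of_lt_of_le one_pos (le_max_right _ _)
  have hXb : ∀ ω, ‖X ω‖ ≤ M' := fun ω => (hM ω).trans (le_max_left _ _)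
  -- coordinate measurability
  have hXi : ∀ i, Measurable fun ω => X ω i := fun i =>
    ((EuclideanSpace.proj (𝕜 := ℝ) i).continuous.measurable).comp hXm
  -- integrability of coordinate products
  have hXij : ∀ i j, Integrable (fun ω => X ω i * X ω j) P := by
    intro i j
    refine (integrable_const (M' * M')).mono' (((hXi i).mul (hXi j)).aestronglyMeasurable) ?_
    filter_upwards with ω
    have h1 := (abs_coord_le (X ω) i).trans (hXb ω)
    have h2 := (abs_coord_le (X ω) j).trans (hXb ω)
    calc ‖X ω i * X ω j‖ = |X ω i| * |X ω j| := abs_mul _ _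
      _ ≤ M' * M' := mul_le_mul h1 h2 (abs_nonneg _) hM'0.le
  -- the variance function and its continuity
  set g : Vec k → ℝ := fun u => ∫ ω, (dot (X ω) u) ^ 2 ∂P with hgdef
  have hg_eq : ∀ u : Vec k, g u = ∑ i, ∑ j, (∫ ω, X ω i * X ω j ∂P) * (u i * u j) := by
    intro u
    have : g u = ∫ ω, ∑ i, ∑ j, (X ω i * X ω j) * (u i * u j) ∂P := by
      simp only [hgdef]
      exact integral_congr_ae (Filter.Eventually.of_forall fun ω => dot_sq_expand _ _)
    rw [this, integral_finset_sum _ (fun i _ => integrable_finset_sum _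
      (fun j _ => (hXij i j).mul_const _))]
    refine Finset.sum_congr rfl fun i _ => ?_
    rw [integral_finset_sum _ (fun j _ => (hXij i j).mul_const _)]
    exact Finset.sum_congr rfl fun j _ => integral_mul_const _ _
  have hgc : Continuous g := by
    have : Continuous fun u : Vec k => ∑ i, ∑ j, (∫ ω, X ω i * X ω j ∂P) * (u i * u j) := by
      refine continuous_finset_sum _ fun i _ => continuous_finset_sum _ fun j _ => ?_
      exact continuous_const.mul
        (((EuclideanSpace.proj (𝕜 := ℝ) i).continuous).mul
          ((EuclideanSpace.proj (𝕜 := ℝ) j).continuous))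
    exact (continuous_congr fun u => (hg_eq u).symm).mp this
  -- minimum on the sphere
  have hcpt : IsCompact (Metric.sphere (0 : Vec k) 1) := isCompact_sphere 0 1
  obtain ⟨u₀, hu₀⟩ := hsp
  have hu₀s : u₀ ∈ Metric.sphere (0 : Vec k) 1 := by
    simpa [mem_sphere_zero_iff_norm] using hu₀
  obtain ⟨v, hvs, hvmin⟩ := hcpt.exists_isMinOn ⟨u₀, hu₀s⟩ hgc.continuousOn
  set m : ℝ := g v with hmdef
  have hvnorm : ‖v‖ = 1 := mem_sphere_zero_iff_norm.mp hvs
  have hm : 0 < m := hpos v (by intro h; rw [h] at hvnorm; simp at hvnorm)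
  refine ⟨Real.sqrt (m / 2), Real.sqrt_pos.mpr (by linarith), m / (4 * M' ^ 2),
    by positivity, ?_⟩
  intro u hu
  set c₁ : ℝ := Real.sqrt (m / 2) with hc₁def
  set A : Set Ω := {ω | c₁ < |dot (X ω) u|} with hAdef
  have hdm : Measurable fun ω => dot (X ω) u := by
    simp only [dot]
    exact Finset.measurable_sum _ fun i _ => (hXi i).mul_const _
  have hA : MeasurableSet A := measurableSet_lt measurable_const hdm.abs
  -- pointwise bound
  have hpt : ∀ ω, (dot (X ω) u) ^ 2 ≤ m / 2 + A.indicator (fun _ => M' ^ 2) ω := by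
    intro ω
    by_cases hω : ω ∈ A
    · rw [Set.indicator_of_mem hω]
      have hb : |dot (X ω) u| ≤ M' := by
        calc |dot (X ω) u| ≤ ‖X ω‖ * ‖u‖ := abs_dot_le _ _
          _ ≤ M' := by rw [hu, mul_one]; exact hXb ω
      have : (dot (X ω) u) ^ 2 ≤ M' ^ 2 := by
        rw [← sq_abs]; exact pow_le_pow_left₀ (abs_nonneg _) hb 2
      linarith
    · rw [Set.indicator_of_notMem hω, add_zero]
      have hb : |dot (X ω) u| ≤ c₁ := le_of_not_gt hω
      calc (dot (X ω) u) ^ 2 = |dot (X ω) u| ^ 2 := (sq_abs _).symm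
        _ ≤ c₁ ^ 2 := pow_le_pow_left₀ (abs_nonneg _) hb 2
        _ = m / 2 := Real.sq_sqrt (by linarith)
  -- integrate the bound
  have hint : Integrable (fun ω => (dot (X ω) u) ^ 2) P := by
    refine (integrable_const (M' ^ 2)).mono' (hdm.pow_const 2).aestronglyMeasurable ?_
    filter_upwards with ω
    have hb : |dot (X ω) u| ≤ M' := by
      calc |dot (X ω) u| ≤ ‖X ω‖ * ‖u‖ := abs_dot_le _ _
        _ ≤ M' := by rw [hu, mul_one]; exact hXb ω
    rw [Real.norm_eq_abs, abs_pow]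
    exact pow_le_pow_left₀ (abs_nonneg _) hb 2
  have hindint : Integrable (A.indicator fun _ => M' ^ 2) P :=
    (integrable_const (M' ^ 2)).indicator hA
  have hib : g u ≤ m / 2 + M' ^ 2 * (P A).toReal := by
    have h1 : g u ≤ ∫ ω, (m / 2 + A.indicator (fun _ => M' ^ 2) ω) ∂P :=
      integral_mono hint (integrable_const _ |>.add hindint)
        (fun ω => hpt ω)
    rw [integral_add (integrable_const _) hindint, integral_const,
      integral_indicator_const _ hA] at h1
    simpa [mul_comm, Measure.real] using h1
  have hmu : m ≤ g u := hvmin (mem_sphere_zero_iff_norm.mpr hu)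
  have ht : m / (2 * M' ^ 2) ≤ (P A).toReal := by
    rw [div_le_iff₀ (by positivity)]
    nlinarith [hib, hmu]
  have hlt : m / (4 * M' ^ 2) < (P A).toReal :=
    lt_of_lt_of_le (by rw [div_lt_div_iff₀ (by positivity) (by positivity)]; nlinarith [mul_pos hm (pow_pos hM'0 2)]) ht
  rw [← ENNReal.ofReal_toReal (measure_ne_top P A)]
  exact (ENNReal.ofReal_lt_ofReal_iff (lt_of_le_of_lt (by positivity) hlt)).mpr hlt
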